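/- Let 𝒜 be an abelian category and (𝒞,𝒲,ℱ) a Hovey triple in 𝒜. Set 𝒳 = 𝒞 ∩ 𝒲 ∩ ℱ. Then (𝒞,𝒳,ℱ) is a localization triple in 𝒜. More precisely: for each object A choose (using completeness of the cotorsion pairs) short exact sequences 0 → W_A →^{ω_A} Q(A) →^{r_A} A → 0 with Q(A) ∈ 𝒞 and W_A ∈ 𝒲 ∩ ℱ, and 0 → A →^{j^A} R(A) →^{τ^A} W^A → 0 with R(A) ∈ ℱ and W^A ∈ 𝒞 ∩ 𝒲; then r_A is a 𝒞-precover of A, ω_A is a weak kernel of r_A, every morphism from an object of 𝒞 to W_A factors through an object of 𝒳; j^A is an ℱ-preenvelope of A, τ^A is a weak cokernel of j^A, every morphism from W^A to an object of ℱ factors through an object of 𝒳; and Q(A) ∈ 𝒞 ∩ ℱ whenever A ∈ ℱ, while R(A) ∈ 𝒞 ∩ ℱ whenever A ∈ 𝒞. -/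
import Mathlib


open CategoryTheory CategoryTheory.Limits

universe v u

namespace LiHovey

variable {𝒜 : Type u} [Category.{v} 𝒜] [Abelian 𝒜]

/-- `f` factors through an object belonging to `X`. -/
def FactorsThruSet (X : Set 𝒜) {A B : 𝒜} (f : A ⟶ B) : Prop :=
  ∃ (M : 𝒜) (_ : M ∈ X) (u : A ⟶ M) (v : M ⟶ B), f = u ≫ v

/-- `Ext¹(A, B) = 0`, expressed by the splitting of every short exact sequence
`0 → B → E → A → 0`. -/
def Ext1Zero (A B : 𝒜) : Prop :=
  ∀ (E : 𝒜) (i : B ⟶ E) (p : E ⟶ A) (w : i ≫ p = 0),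
    (ShortComplex.mk i p w).ShortExact → ∃ s : A ⟶ E, s ≫ p = 𝟙 A

/-- `(C, Y)` is a cotorsion pair. -/
def IsCotorsionPair (C Y : Set 𝒜) : Prop :=
  (∀ A : 𝒜, A ∈ C ↔ ∀ B ∈ Y, Ext1Zero A B) ∧
  (∀ B : 𝒜, B ∈ Y ↔ ∀ A ∈ C, Ext1Zero A B)

/-- The cotorsion pair `(C, Y)` is complete: it has enough projectives and
enough injectives. -/
def IsCompleteCotorsionPair (C Y : Set 𝒜) : Prop :=
  IsCotorsionPair C Y ∧
  (∀ A : 𝒜, ∃ (Y₀ C₀ : 𝒜) (i : Y₀ ⟶ C₀) (p : C₀ ⟶ A) (w : i ≫ p = 0),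
    (ShortComplex.mk i p w).ShortExact ∧ C₀ ∈ C ∧ Y₀ ∈ Y) ∧
  (∀ A : 𝒜, ∃ (Y₁ C₁ : 𝒜) (i : A ⟶ Y₁) (p : Y₁ ⟶ C₁) (w : i ≫ p = 0),
    (ShortComplex.mk i p w).ShortExact ∧ C₁ ∈ C ∧ Y₁ ∈ Y)

/-- `W` is a thick class of objects: closed under direct summands and the
two-out-of-three property for short exact sequences. -/
def IsThick (W : Set 𝒜) : Prop :=
  (∀ (A M : 𝒜) (i : A ⟶ M) (p : M ⟶ A), i ≫ p = 𝟙 A → M ∈ W → A ∈ W) ∧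
  (∀ (S : ShortComplex 𝒜), S.ShortExact →
    ((S.X₁ ∈ W → S.X₂ ∈ W → S.X₃ ∈ W) ∧
     (S.X₁ ∈ W → S.X₃ ∈ W → S.X₂ ∈ W) ∧
     (S.X₂ ∈ W → S.X₃ ∈ W → S.X₁ ∈ W)))

/-- `(C, W, F)` is a Hovey triple. -/
def IsHoveyTriple (C W F : Set 𝒜) : Prop :=
  IsThick W ∧ IsCompleteCotorsionPair C (W ∩ F) ∧ IsCompleteCotorsionPair (C ∩ W) F


section Helpers

/-- Lift a morphism along an epimorphism whose kernel has vanishing `Ext¹` against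
the source. -/
lemma lift_of_ext1 {K E B X : 𝒜} {k : K ⟶ E} {p : E ⟶ B} {w : k ≫ p = 0}
    (hse : (ShortComplex.mk k p w).ShortExact) (hext : Ext1Zero X K) (f : X ⟶ B) :
    ∃ h : X ⟶ E, h ≫ p = f := by
  haveI : Mono k := hse.mono_f
  haveI : Epi p := hse.epi_g
  let k' : K ⟶ pullback p f := pullback.lift k 0 (by rw [w, zero_comp])
  have hfst : k' ≫ pullback.fst p f = k := pullback.lift_fst _ _ _
  have hsnd : k' ≫ pullback.snd p f = 0 := pullback.lift_snd _ _ _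
  haveI : Mono k' := mono_of_mono_fac hfst
  haveI : Epi (pullback.snd p f) := inferInstance
  have hker : IsLimit (KernelFork.ofι k' hsnd) := by
    refine KernelFork.IsLimit.ofι' k' hsnd (fun {T} t ht => ?_)
    have h1 : (t ≫ pullback.fst p f) ≫ p = 0 := by
      rw [Category.assoc, pullback.condition, ← Category.assoc, ht, zero_comp]
    obtain ⟨u, hu⟩ := KernelFork.IsLimit.lift' hse.fIsKernel (t ≫ pullback.fst p f) h1
    replace hu : u ≫ k = t ≫ pullback.fst p f := hu
    refine ⟨u, ?_⟩
    refine pullback.hom_ext ?_ ?_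
    · rw [Category.assoc, hfst]; exact hu
    · rw [Category.assoc, hsnd, comp_zero, ht]
  have hse' : (ShortComplex.mk k' (pullback.snd p f) hsnd).ShortExact :=
    ShortComplex.ShortExact.mk' (ShortComplex.exact_of_f_is_kernel _ hker) ‹_› ‹_›
  obtain ⟨s, hs⟩ := hext _ k' (pullback.snd p f) hsnd hse'
  refine ⟨s ≫ pullback.fst p f, ?_⟩
  rw [Category.assoc, pullback.condition, ← Category.assoc, hs, Category.id_comp]

/-- Extend a morphism along a monomorphism whose cokernel has vanishing `Ext¹` against
the target. -/
lemma extend_of_ext1 {A E B Y : 𝒜} {i : A ⟶ E} {p : E ⟶ B} {w : i ≫ p = 0}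
    (hse : (ShortComplex.mk i p w).ShortExact) (hext : Ext1Zero B Y) (g : A ⟶ Y) :
    ∃ h : E ⟶ Y, i ≫ h = g := by
  haveI : Mono i := hse.mono_f
  haveI : Epi p := hse.epi_g
  let c : pushout i g ⟶ B := pushout.desc p 0 (by rw [w, comp_zero])
  have hinl : pushout.inl i g ≫ c = p := pushout.inl_desc _ _ _
  have hinr : pushout.inr i g ≫ c = 0 := pushout.inr_desc _ _ _
  haveI : Epi c := epi_of_epi_fac hinl
  haveI : Mono (pushout.inr i g) := inferInstance
  have hcoker : IsColimit (CokernelCofork.ofπ c hinr) := by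
    refine CokernelCofork.IsColimit.ofπ' c hinr (fun {T} t ht => ?_)
    have h1 : i ≫ pushout.inl i g ≫ t = 0 := by
      rw [pushout.condition_assoc, ht, comp_zero]
    obtain ⟨u, hu⟩ := CokernelCofork.IsColimit.desc' hse.gIsCokernel
      (pushout.inl i g ≫ t) h1
    replace hu : p ≫ u = pushout.inl i g ≫ t := hu
    refine ⟨u, ?_⟩
    refine pushout.hom_ext ?_ ?_
    · rw [← Category.assoc, hinl]; exact hu
    · rw [← Category.assoc, hinr, zero_comp, ht]
  have hse' : (ShortComplex.mk (pushout.inr i g) c hinr).ShortExact :=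
    ShortComplex.ShortExact.mk' (ShortComplex.exact_of_g_is_cokernel _ hcoker) ‹_› ‹_›
  obtain ⟨s, hs⟩ := hext _ (pushout.inr i g) c hinr hse'
  let sp := ShortComplex.Splitting.ofExactOfSection _ hse'.exact s hs ‹_›
  refine ⟨pushout.inl i g ≫ sp.r, ?_⟩
  rw [← Category.assoc, pushout.condition, Category.assoc, sp.f_r, Category.comp_id]

/-- The right orthogonal class with respect to `Ext¹`-vanishing is closed under
extensions. -/
lemma ext1Zero_extension_right {Y₁ E Y₂ A : 𝒜} {m : Y₁ ⟶ E} {e : E ⟶ Y₂} {w : m ≫ e = 0}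
    (hσ : (ShortComplex.mk m e w).ShortExact)
    (h1 : Ext1Zero A Y₁) (h2 : Ext1Zero A Y₂) : Ext1Zero A E := by
  intro G i p wip hGse
  haveI : Mono i := hGse.mono_f
  haveI : Epi p := hGse.epi_g
  haveI : Mono m := hσ.mono_f
  haveI : Epi e := hσ.epi_g
  obtain ⟨et, het⟩ := extend_of_ext1 hGse h2 e
  haveI : Epi et := epi_of_epi_fac het
  have hkc : kernel.ι et ≫ et = 0 := kernel.condition et
  have hmi : (m ≫ i) ≫ et = 0 := by rw [Category.assoc, het, w]
  let m' : Y₁ ⟶ kernel et := kernel.lift et (m ≫ i) hmi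
  have hm' : m' ≫ kernel.ι et = m ≫ i := kernel.lift_ι _ _ _
  haveI : Mono (m ≫ i) := mono_comp _ _
  haveI : Mono m' := mono_of_mono_fac hm'
  have hkse : (ShortComplex.mk (kernel.ι et) et hkc).ShortExact :=
    ShortComplex.ShortExact.mk'
      (ShortComplex.exact_of_f_is_kernel _ (kernelIsKernel et)) inferInstance inferInstance
  have w' : m' ≫ (kernel.ι et ≫ p) = 0 := by
    rw [← Category.assoc, hm', Category.assoc, wip, comp_zero]
  haveI : Epi (kernel.ι et ≫ p) := by
    refine Preadditive.epi_of_cancel_zero _ (fun {T} c hc => ?_)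
    obtain ⟨d, hd⟩ := CokernelCofork.IsColimit.desc' hkse.gIsCokernel (p ≫ c)
      (by rw [← Category.assoc]; exact hc)
    replace hd : et ≫ d = p ≫ c := hd
    have hed : e ≫ d = 0 := by
      rw [← het, Category.assoc, hd, ← Category.assoc, wip, zero_comp]
    have hd0 : d = 0 := zero_of_epi_comp e hed
    refine zero_of_epi_comp p ?_
    rw [← hd, hd0, comp_zero]
  have hker : IsLimit (KernelFork.ofι m' w') := by
    refine KernelFork.IsLimit.ofι' m' w' (fun {T} t ht => ?_)
    obtain ⟨u, hu⟩ := KernelFork.IsLimit.lift' hGse.fIsKernel (t ≫ kernel.ι et)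
      (by rw [Category.assoc]; exact ht)
    replace hu : u ≫ i = t ≫ kernel.ι et := hu
    have hue : u ≫ e = 0 := by
      rw [← het, ← Category.assoc, hu, Category.assoc, hkc, comp_zero]
    obtain ⟨v, hv⟩ := KernelFork.IsLimit.lift' hσ.fIsKernel u hue
    replace hv : v ≫ m = u := hv
    refine ⟨v, ?_⟩
    rw [← cancel_mono (kernel.ι et), Category.assoc, hm', ← Category.assoc, hv]
    exact hu
  have hse2 : (ShortComplex.mk m' (kernel.ι et ≫ p) w').ShortExact :=
    ShortComplex.ShortExact.mk' (ShortComplex.exact_of_f_is_kernel _ hker) ‹_› ‹_›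
  obtain ⟨s, hs⟩ := h1 _ m' (kernel.ι et ≫ p) w' hse2
  refine ⟨s ≫ kernel.ι et, ?_⟩
  rw [Category.assoc]; exact hs

/-- The left orthogonal class with respect to `Ext¹`-vanishing is closed under
extensions. -/
lemma ext1Zero_extension_left {A₁ E A₂ Y : 𝒜} {m : A₁ ⟶ E} {e : E ⟶ A₂} {w : m ≫ e = 0}
    (hσ : (ShortComplex.mk m e w).ShortExact)
    (h1 : Ext1Zero A₁ Y) (h2 : Ext1Zero A₂ Y) : Ext1Zero E Y := by
  intro G iG p wip hGse
  haveI : Mono iG := hGse.mono_f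
  haveI : Epi p := hGse.epi_g
  haveI : Mono m := hσ.mono_f
  haveI : Epi e := hσ.epi_g
  obtain ⟨mt, hmt⟩ := lift_of_ext1 hGse h1 m
  haveI : Mono mt := mono_of_mono_fac hmt
  have hqc : mt ≫ cokernel.π mt = 0 := cokernel.condition mt
  have hpe : mt ≫ (p ≫ e) = 0 := by rw [← Category.assoc, hmt, w]
  let d : cokernel mt ⟶ A₂ := cokernel.desc mt (p ≫ e) hpe
  have hd : cokernel.π mt ≫ d = p ≫ e := cokernel.π_desc _ _ _
  haveI : Epi (p ≫ e) := epi_comp _ _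
  haveI : Epi d := epi_of_epi_fac hd
  have hqse : (ShortComplex.mk mt (cokernel.π mt) hqc).ShortExact :=
    ShortComplex.ShortExact.mk'
      (ShortComplex.exact_of_g_is_cokernel _ (cokernelIsCokernel mt)) inferInstance inferInstance
  have w' : (iG ≫ cokernel.π mt) ≫ d = 0 := by
    rw [Category.assoc, hd, ← Category.assoc, wip, zero_comp]
  haveI : Mono (iG ≫ cokernel.π mt) := by
    refine Preadditive.mono_of_cancel_zero _ (fun {T} t ht => ?_)
    obtain ⟨u, hu⟩ := KernelFork.IsLimit.lift' hqse.fIsKernel (t ≫ iG)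
      (by rw [Category.assoc]; exact ht)
    replace hu : u ≫ mt = t ≫ iG := hu
    have hum : u ≫ m = 0 := by
      rw [← hmt, ← Category.assoc, hu, Category.assoc, wip, comp_zero]
    have hu0 : u = 0 := zero_of_comp_mono m hum
    have htiG : t ≫ iG = 0 := by rw [← hu, hu0, zero_comp]
    exact zero_of_comp_mono iG htiG
  have hcoker : IsColimit (CokernelCofork.ofπ d w') := by
    refine CokernelCofork.IsColimit.ofπ' d w' (fun {T} t ht => ?_)
    obtain ⟨u, hu⟩ := CokernelCofork.IsColimit.desc' hGse.gIsCokernel (cokernel.π mt ≫ t)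
      (by rw [← Category.assoc]; exact ht)
    replace hu : p ≫ u = cokernel.π mt ≫ t := hu
    have hmu : m ≫ u = 0 := by
      rw [← hmt, Category.assoc, hu, ← Category.assoc, hqc, zero_comp]
    obtain ⟨v, hv⟩ := CokernelCofork.IsColimit.desc' hσ.gIsCokernel u hmu
    replace hv : e ≫ v = u := hv
    refine ⟨v, ?_⟩
    rw [← cancel_epi (cokernel.π mt), ← Category.assoc, hd, Category.assoc, hv, hu]
  have hse2 : (ShortComplex.mk (iG ≫ cokernel.π mt) d w').ShortExact :=
    ShortComplex.ShortExact.mk' (ShortComplex.exact_of_g_is_cokernel _ hcoker) ‹_› ‹_›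
  obtain ⟨s₂, hs₂⟩ := h2 _ (iG ≫ cokernel.π mt) d w' hse2
  let sp2 := ShortComplex.Splitting.ofExactOfSection _ hse2.exact s₂ hs₂ ‹_›
  have hr : iG ≫ (cokernel.π mt ≫ sp2.r) = 𝟙 Y := by
    rw [← Category.assoc]; exact sp2.f_r
  let sp := ShortComplex.Splitting.ofExactOfRetraction _ hGse.exact
    (cokernel.π mt ≫ sp2.r) hr ‹_›
  exact ⟨sp.s, sp.s_g⟩

end Helpers

/-- A Hovey triple `(C, W, F)` gives rise to a localization triple
`(C, C ∩ W ∩ F, F)`. -/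
theorem hoveyTriple_gives_localizationTriple {C W F : Set 𝒜}
    (hH : IsHoveyTriple C W F)
    (Qobj Wl : 𝒜 → 𝒜) (ω : ∀ A : 𝒜, Wl A ⟶ Qobj A) (r : ∀ A : 𝒜, Qobj A ⟶ A)
    (hw : ∀ A : 𝒜, ω A ≫ r A = 0)
    (hse : ∀ A : 𝒜, (ShortComplex.mk (ω A) (r A) (hw A)).ShortExact)
    (hQC : ∀ A : 𝒜, Qobj A ∈ C) (hWl : ∀ A : 𝒜, Wl A ∈ W ∩ F)
    (Robj Wr : 𝒜 → 𝒜) (j : ∀ A : 𝒜, A ⟶ Robj A) (τ : ∀ A : 𝒜, Robj A ⟶ Wr A)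
    (hw' : ∀ A : 𝒜, j A ≫ τ A = 0)
    (hse' : ∀ A : 𝒜, (ShortComplex.mk (j A) (τ A) (hw' A)).ShortExact)
    (hRF : ∀ A : 𝒜, Robj A ∈ F) (hWr : ∀ A : 𝒜, Wr A ∈ C ∩ W) :
    (∀ (A C' : 𝒜), C' ∈ C → ∀ g : C' ⟶ A, ∃ h : C' ⟶ Qobj A, h ≫ r A = g) ∧
    (∀ (A T : 𝒜) (g : T ⟶ Qobj A), g ≫ r A = 0 → ∃ h : T ⟶ Wl A, h ≫ ω A = g) ∧
    (∀ (A C' : 𝒜), C' ∈ C → ∀ g : C' ⟶ Wl A, FactorsThruSet (C ∩ W ∩ F) g) ∧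
    (∀ (A F' : 𝒜), F' ∈ F → ∀ g : A ⟶ F', ∃ h : Robj A ⟶ F', j A ≫ h = g) ∧
    (∀ (A T : 𝒜) (g : Robj A ⟶ T), j A ≫ g = 0 → ∃ h : Wr A ⟶ T, τ A ≫ h = g) ∧
    (∀ (A F' : 𝒜), F' ∈ F → ∀ g : Wr A ⟶ F', FactorsThruSet (C ∩ W ∩ F) g) ∧
    (∀ A : 𝒜, A ∈ F → Qobj A ∈ C ∩ F) ∧
    (∀ A : 𝒜, A ∈ C → Robj A ∈ C ∩ F) := by
  obtain ⟨hthick, hcp1, hcp2⟩ := hH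
  have extCWF : ∀ {X B : 𝒜}, X ∈ C → B ∈ W ∩ F → Ext1Zero X B :=
    fun {X B} hX hB => (hcp1.1.1 X).mp hX B hB
  have extF : ∀ {X B : 𝒜}, X ∈ C ∩ W → B ∈ F → Ext1Zero X B :=
    fun {X B} hX hB => (hcp2.1.1 X).mp hX B hB
  refine ⟨?_, ?_, ?_, ?_, ?_, ?_, ?_, ?_⟩
  · intro A C' hC' g
    exact lift_of_ext1 (hse A) (extCWF hC' (hWl A)) g
  · intro A T g hg
    obtain ⟨h, hh⟩ := KernelFork.IsLimit.lift' (hse A).fIsKernel g hg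
    exact ⟨h, hh⟩
  · intro A C' hC' g
    obtain ⟨Y₀, C₀, i₀, p₀, w₀, se₀, hC₀, hY₀⟩ := hcp1.2.1 (Wl A)
    obtain ⟨h, hh⟩ := lift_of_ext1 se₀ (extCWF hC' hY₀) g
    have hC₀W : C₀ ∈ W := (hthick.2 _ se₀).2.1 hY₀.1 (hWl A).1
    have hC₀F : C₀ ∈ F := by
      refine (hcp2.1.2 C₀).mpr (fun A' hA' => ?_)
      exact ext1Zero_extension_right se₀ (extF hA' hY₀.2) (extF hA' (hWl A).2)
    exact ⟨C₀, ⟨⟨hC₀, hC₀W⟩, hC₀F⟩, h, p₀, hh.symm⟩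
  · intro A F' hF' g
    exact extend_of_ext1 (hse' A) (extF (hWr A) hF') g
  · intro A T g hg
    obtain ⟨h, hh⟩ := CokernelCofork.IsColimit.desc' (hse' A).gIsCokernel g hg
    exact ⟨h, hh⟩
  · intro A F' hF' g
    obtain ⟨Y₁, C₁, i₁, p₁, w₁, se₁, hC₁, hY₁⟩ := hcp2.2.2 (Wr A)
    obtain ⟨h, hh⟩ := extend_of_ext1 se₁ (extF hC₁ hF') g
    have hY₁W : Y₁ ∈ W := (hthick.2 _ se₁).2.1 (hWr A).2 hC₁.2
    have hY₁C : Y₁ ∈ C := by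
      refine (hcp1.1.1 Y₁).mpr (fun B hB => ?_)
      exact ext1Zero_extension_left se₁ (extCWF (hWr A).1 hB) (extCWF hC₁.1 hB)
    exact ⟨Y₁, ⟨⟨hY₁C, hY₁W⟩, hY₁⟩, i₁, h, hh.symm⟩
  · intro A hA
    refine ⟨hQC A, (hcp2.1.2 _).mpr (fun A' hA' => ?_)⟩
    exact ext1Zero_extension_right (hse A) (extF hA' (hWl A).2) (extF hA' hA)
  · intro A hA
    refine ⟨(hcp1.1.1 _).mpr (fun B hB => ?_), hRF A⟩
    exact ext1Zero_extension_left (hse' A) (extCWF hA hB) (extCWF (hWr A).1 hB)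

end LiHovey
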